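/- The map f ↦ (i(f), e(f)) is an isometry from (X, d) onto X', where X' = {(s, f) ∈ ℝ × C(ℝ : M) : f(t) = f(s) for all t ≤ s}; consequently (X, d) is a complete separable metric space and X' is a closed subset of ℝ × C(ℝ : M). -/

import Mathlib

open Set Filter

noncomputable section

variable (M : Type*) [MetricSpace M]

/-- The space `X = ⋃ₛ C([s,∞) : M)` of continuous paths with arbitrary starting times. -/
def PathX : Type _ := Σ s : ℝ, C(Set.Ici s, M)

variable {M}

/-- Starting time `i(f)` of a path. -/
def istart (f : PathX M) : ℝ := f.1

/-- The continuous extension `e(f) ∈ C(ℝ : M)`, `e(f)(t) = f(i(f) ∨ t)`. -/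
def pext (f : PathX M) : C(ℝ, M) :=
  f.2.comp ⟨fun t => (⟨max f.1 t, Set.mem_Ici.mpr (le_max_left _ _)⟩ : Set.Ici f.1),
    Continuous.subtype_mk (continuous_const.max continuous_id) fun t => le_max_left f.1 t⟩

variable (M)

/-- A distance `δ` on `C(ℝ : M)` for the topology of uniform convergence on compact
subsets of `ℝ`. -/
def deltaDist (f g : C(ℝ, M)) : ℝ :=
  ∑' n : ℕ, (1 / 2 : ℝ) ^ n *
    min 1 (⨆ t : Set.Icc (-(n : ℝ)) (n : ℝ), dist (f t) (g t))

/-- The distance `d₁` on `ℝ × C(ℝ : M)`. -/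
def dOne (p q : ℝ × C(ℝ, M)) : ℝ := |p.1 - q.1| + deltaDist M p.2 q.2

/-- The distance `d` on `X`: `d(f,g) = |i(f) − i(g)| + δ(e(f), e(g))`. -/
def dPath (f g : PathX M) : ℝ := |istart f - istart g| + deltaDist M (pext f) (pext g)

/-- The subset `X' = {(s,f) : f(t) = f(s) for all t ≤ s}` of `ℝ × C(ℝ : M)`. -/
def XPrime : Set (ℝ × C(ℝ, M)) := {p | ∀ t ≤ p.1, p.2 t = p.2 p.1}

set_option maxHeartbeats 1000000

namespace PathAux

variable {M}

/-- sup distance over `[-N,N]`. -/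
def sD (N : ℕ) (f g : C(ℝ, M)) : ℝ :=
  ⨆ t : Set.Icc (-(N : ℝ)) (N : ℝ), dist (f t) (g t)

lemma deltaDist_eq (f g : C(ℝ, M)) :
    deltaDist M f g = ∑' n : ℕ, (1 / 2 : ℝ) ^ n * min 1 (sD n f g) := rfl

instance nonempty_Icc (N : ℕ) : Nonempty (Set.Icc (-(N : ℝ)) (N : ℝ)) :=
  ⟨⟨0, Set.mem_Icc.mpr ⟨neg_nonpos.mpr (Nat.cast_nonneg N), Nat.cast_nonneg N⟩⟩⟩

lemma bdd (N : ℕ) (f g : C(ℝ, M)) :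
    BddAbove (Set.range fun t : Set.Icc (-(N : ℝ)) (N : ℝ) => dist (f t) (g t)) := by
  have hc : ContinuousOn (fun t : ℝ => dist (f t) (g t)) (Set.Icc (-(N : ℝ)) N) :=
    (f.continuous.dist g.continuous).continuousOn
  have := (isCompact_Icc.image_of_continuousOn hc).bddAbove
  rwa [Set.image_eq_range] at this

lemma sD_nonneg (N : ℕ) (f g : C(ℝ, M)) : 0 ≤ sD N f g :=
  Real.iSup_nonneg fun _ => dist_nonneg

lemma dist_le_sD {N : ℕ} {t : ℝ} (ht : t ∈ Set.Icc (-(N : ℝ)) (N : ℝ)) (f g : C(ℝ, M)) :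
    dist (f t) (g t) ≤ sD N f g := le_ciSup (bdd N f g) (⟨t, ht⟩ : Set.Icc (-(N : ℝ)) (N : ℝ))

lemma sD_le {N : ℕ} {C : ℝ} (f g : C(ℝ, M))
    (h : ∀ t ∈ Set.Icc (-(N : ℝ)) (N : ℝ), dist (f t) (g t) ≤ C) : sD N f g ≤ C :=
  ciSup_le fun t => h t t.2

lemma sD_mono {n N : ℕ} (h : n ≤ N) (f g : C(ℝ, M)) : sD n f g ≤ sD N f g := by
  refine sD_le f g fun t ht => dist_le_sD ⟨?_, ?_⟩ f g
  · exact le_trans (neg_le_neg (Nat.cast_le.mpr h)) ht.1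
  · exact ht.2.trans (Nat.cast_le.mpr h)

lemma term_nonneg (n : ℕ) (f g : C(ℝ, M)) : 0 ≤ (1 / 2 : ℝ) ^ n * min 1 (sD n f g) :=
  mul_nonneg (by positivity) (le_min zero_le_one (sD_nonneg n f g))

lemma term_le (n : ℕ) (f g : C(ℝ, M)) :
    (1 / 2 : ℝ) ^ n * min 1 (sD n f g) ≤ (1 / 2 : ℝ) ^ n :=
  mul_le_of_le_one_right (by positivity) (min_le_left _ _)

lemma summable_term (f g : C(ℝ, M)) :
    Summable (fun n => (1 / 2 : ℝ) ^ n * min 1 (sD n f g)) :=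
  Summable.of_nonneg_of_le (fun n => term_nonneg n f g) (fun n => term_le n f g)
    (summable_geometric_of_lt_one (by norm_num) (by norm_num))

lemma delta_nonneg (f g : C(ℝ, M)) : 0 ≤ deltaDist M f g :=
  tsum_nonneg fun n => term_nonneg n f g

lemma min_le_delta (N : ℕ) (f g : C(ℝ, M)) :
    (1 / 2 : ℝ) ^ N * min 1 (sD N f g) ≤ deltaDist M f g := by
  rw [deltaDist_eq]
  exact Summable.le_tsum (summable_term f g) N fun n _ => term_nonneg n f g

lemma delta_le (N : ℕ) (f g : C(ℝ, M)) :
    deltaDist M f g ≤ 2 * min 1 (sD N f g) + (1 / 2 : ℝ) ^ N := by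
  have hsum := summable_term f g
  rw [deltaDist_eq, ← Summable.sum_add_tsum_nat_add (N + 1) hsum]
  have h1 : ∑ n ∈ Finset.range (N + 1), (1 / 2 : ℝ) ^ n * min 1 (sD n f g)
      ≤ 2 * min 1 (sD N f g) := by
    calc ∑ n ∈ Finset.range (N + 1), (1 / 2 : ℝ) ^ n * min 1 (sD n f g)
        ≤ ∑ n ∈ Finset.range (N + 1), (1 / 2 : ℝ) ^ n * min 1 (sD N f g) := by
          refine Finset.sum_le_sum fun n hn => ?_
          exact mul_le_mul_of_nonneg_left
            (min_le_min le_rfl (sD_mono (Nat.lt_succ_iff.mp (Finset.mem_range.mp hn)) f g))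
            (by positivity)
      _ = (∑ n ∈ Finset.range (N + 1), (1 / 2 : ℝ) ^ n) * min 1 (sD N f g) := by
          rw [Finset.sum_mul]
      _ ≤ 2 * min 1 (sD N f g) := by
          refine mul_le_mul_of_nonneg_right ?_ (le_min zero_le_one (sD_nonneg N f g))
          have : ∑ n ∈ Finset.range (N + 1), (1 / 2 : ℝ) ^ n ≤ ∑' n : ℕ, (1 / 2 : ℝ) ^ n :=
            Summable.sum_le_tsum _ (fun n _ => by positivity)
              (summable_geometric_of_lt_one (by norm_num) (by norm_num))
          rw [tsum_geometric_of_lt_one (by norm_num) (by norm_num)] at this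
          norm_num at this ⊢
          linarith
  have h2 : ∑' k : ℕ, (1 / 2 : ℝ) ^ (k + (N + 1)) * min 1 (sD (k + (N + 1)) f g)
      ≤ (1 / 2 : ℝ) ^ N := by
    have hs1 : Summable fun k : ℕ => (1 / 2 : ℝ) ^ (k + (N + 1)) * min 1 (sD (k + (N + 1)) f g) :=
      (summable_nat_add_iff (N + 1)).mpr hsum
    have hs2 : Summable fun k : ℕ => (1 / 2 : ℝ) ^ (k + (N + 1)) :=
      (summable_nat_add_iff (N + 1)).mpr
        (summable_geometric_of_lt_one (by norm_num) (by norm_num))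
    calc ∑' k : ℕ, (1 / 2 : ℝ) ^ (k + (N + 1)) * min 1 (sD (k + (N + 1)) f g)
        ≤ ∑' k : ℕ, (1 / 2 : ℝ) ^ (k + (N + 1)) :=
          Summable.tsum_le_tsum (fun k => term_le _ f g) hs1 hs2
      _ = (1 / 2 : ℝ) ^ N := by
          have : ∀ k : ℕ, (1 / 2 : ℝ) ^ (k + (N + 1)) = (1 / 2 : ℝ) ^ k * (1 / 2 : ℝ) ^ (N + 1) :=
            fun k => pow_add _ _ _
          simp only [this]
          rw [tsum_mul_right, tsum_geometric_of_lt_one (by norm_num) (by norm_num), pow_succ]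
          norm_num
          ring
  linarith

lemma min_one_small {d c : ℝ} (hc1 : c ≤ 1) (h : min 1 d < c) : d < c := by
  by_contra h'
  exact absurd (le_min hc1 (not_lt.mp h')) (not_le.mpr h)

lemma sD_lt_of_delta_lt {N : ℕ} {c : ℝ} (hc : c ≤ 1) {f g : C(ℝ, M)}
    (h : deltaDist M f g < (1 / 2 : ℝ) ^ N * c) : sD N f g < c := by
  have h1 := min_le_delta N f g
  have h2 : (1 / 2 : ℝ) ^ N * min 1 (sD N f g) < (1 / 2 : ℝ) ^ N * c := lt_of_le_of_lt h1 h
  have h3 : min 1 (sD N f g) < c := lt_of_mul_lt_mul_left h2 (by positivity)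
  exact min_one_small hc h3

lemma tendsto_sD_of_delta {f : ℕ → C(ℝ, M)} {g : C(ℝ, M)}
    (h : Tendsto (fun n => deltaDist M (f n) g) atTop (nhds 0)) (N : ℕ) :
    Tendsto (fun n => sD N (f n) g) atTop (nhds 0) := by
  rw [Metric.tendsto_atTop] at h ⊢
  intro ε hε
  set c : ℝ := min ε 1 with hc
  have hc0 : 0 < c := lt_min hε one_pos
  obtain ⟨n₀, hn₀⟩ := h ((1 / 2 : ℝ) ^ N * (c / 2)) (by positivity)
  refine ⟨n₀, fun n hn => ?_⟩
  have hd := hn₀ n hn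
  rw [Real.dist_eq, sub_zero, abs_of_nonneg (delta_nonneg _ _)] at hd
  have hsd : sD N (f n) g < c / 2 :=
    sD_lt_of_delta_lt (by simp [hc]; linarith [min_le_right ε (1:ℝ)]) hd
  rw [Real.dist_eq, sub_zero, abs_of_nonneg (sD_nonneg _ _ _)]
  have : c ≤ ε := min_le_left _ _
  linarith

lemma tendsto_pt_of_delta {f : ℕ → C(ℝ, M)} {g : C(ℝ, M)}
    (h : Tendsto (fun n => deltaDist M (f n) g) atTop (nhds 0)) (t : ℝ) :
    Tendsto (fun n => f n t) atTop (nhds (g t)) := by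
  set N : ℕ := ⌈|t|⌉₊ with hN
  have ht : t ∈ Set.Icc (-(N : ℝ)) (N : ℝ) := by
    have : |t| ≤ (N : ℝ) := Nat.le_ceil _
    exact abs_le.mp this |>.imp (fun h => h) (fun h => h) |> fun h => ⟨h.1, h.2⟩
  rw [tendsto_iff_dist_tendsto_zero]
  exact squeeze_zero (fun n => dist_nonneg) (fun n => dist_le_sD ht (f n) g)
    (tendsto_sD_of_delta h N)

lemma const_of_lt {g : C(ℝ, M)} {s : ℝ}
    (h : ∀ t < s, ∀ t' < s, g t = g t') : ∀ t ≤ s, g t = g s := by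
  intro t ht
  rcases eq_or_lt_of_le ht with rfl | ht
  · rfl
  · have hseq : Tendsto (fun k : ℕ => s - 1 / (k + 1)) atTop (nhds s) := by
      have h0 := tendsto_one_div_add_atTop_nhds_zero_nat (𝕜 := ℝ)
      have := tendsto_const_nhds (x := s) (f := atTop (α := ℕ)) |>.sub h0
      simpa using this
    have h2 : Tendsto (fun k : ℕ => g (s - 1 / (k + 1))) atTop (nhds (g s)) :=
      (g.continuous.tendsto s).comp hseq
    have h3 : ∀ k : ℕ, g (s - 1 / ((k : ℝ) + 1)) = g t := fun k =>
      h _ (sub_lt_self s (by positivity)) t ht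
    have h4 : Tendsto (fun k : ℕ => g (s - 1 / (k + 1))) atTop (nhds (g t)) := by
      simp only [h3]; exact tendsto_const_nhds
    exact tendsto_nhds_unique h4 h2

end PathAux

open PathAux in
/-- **The map `f ↦ (i(f), e(f))` is an isometry of `(X, d)` onto `X'`**; `X'` is a closed
subset of `(ℝ × C(ℝ : M), d₁)`, and consequently `(X, d)` is a complete separable metric
space. -/
theorem pathX_isometry_onto_XPrime :
    -- (a) the map is an isometry:
    (∀ f g : PathX M, dPath M f g = dOne M (istart f, pext f) (istart g, pext g)) ∧
    -- (b) it is a bijection from `X` onto `X'`: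
    Function.Injective (fun f : PathX M => (istart f, pext f)) ∧
    Set.range (fun f : PathX M => (istart f, pext f)) = XPrime M ∧
    -- (c) `X'` is closed in `(ℝ × C(ℝ : M), d₁)` (sequentially, w.r.t. `d₁`):
    (∀ (p : ℕ → ℝ × C(ℝ, M)) (q : ℝ × C(ℝ, M)), (∀ n, p n ∈ XPrime M) →
      Tendsto (fun n => dOne M (p n) q) atTop (nhds 0) → q ∈ XPrime M) ∧
    -- (d) if `M` is complete, then `(X, d)` is complete:
    (CompleteSpace M →
      ∀ u : ℕ → PathX M,
        (∀ ε : ℝ, 0 < ε → ∃ N, ∀ m ≥ N, ∀ n ≥ N, dPath M (u m) (u n) < ε) →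
        ∃ f : PathX M, Tendsto (fun n => dPath M (u n) f) atTop (nhds 0)) ∧
    -- (e) if `M` is separable, then `(X, d)` is separable:
    (TopologicalSpace.SeparableSpace M →
      ∃ D : Set (PathX M), D.Countable ∧
        ∀ f : PathX M, ∀ ε : ℝ, 0 < ε → ∃ g ∈ D, dPath M f g < ε) := by
  refine ⟨fun f g => rfl, ?_, ?_, ?_, ?_, ?_⟩
  · -- injectivity
    rintro ⟨s, φ⟩ ⟨s', ψ⟩ h
    simp only [Prod.mk.injEq] at h
    obtain ⟨h1, h2⟩ := h
    have hs : s = s' := h1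
    subst hs
    suffices hφ : φ = ψ by rw [hφ]
    ext ⟨t, ht⟩
    have ht' : max s t = t := max_eq_right ht
    have := congrArg (fun F : C(ℝ, M) => F t) h2
    simp only [pext, ContinuousMap.comp_apply, ContinuousMap.coe_mk] at this
    convert this using 2 <;> exact (Subtype.ext ht'.symm)
  · -- range = XPrime
    ext p
    constructor
    · rintro ⟨f, rfl⟩
      intro t ht
      have h1 : max f.1 t = f.1 := max_eq_left ht
      have h2 : max f.1 f.1 = f.1 := max_self _
      show pext f t = pext f f.1
      simp only [pext, ContinuousMap.comp_apply, ContinuousMap.coe_mk]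
      congr 1
      exact Subtype.ext (h1.trans h2.symm)
    · intro hp
      refine ⟨⟨p.1, p.2.comp ⟨Subtype.val, continuous_subtype_val⟩⟩, ?_⟩
      have hpe : pext (⟨p.1, p.2.comp ⟨Subtype.val, continuous_subtype_val⟩⟩ : PathX M) = p.2 := by
        ext t
        simp only [pext, ContinuousMap.comp_apply, ContinuousMap.coe_mk]
        rcases le_total p.1 t with h | h
        · show p.2 (max p.1 t) = p.2 t
          rw [max_eq_right h]
        · show p.2 (max p.1 t) = p.2 t
          rw [max_eq_left h]
          exact (hp t h).symm
      exact Prod.ext rfl hpe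
  · -- closedness
    intro p q hmem htend
    have h1 : Tendsto (fun n => |(p n).1 - q.1|) atTop (nhds 0) :=
      squeeze_zero (fun n => abs_nonneg _)
        (fun n => le_add_of_nonneg_right (delta_nonneg _ _)) htend
    have h2 : Tendsto (fun n => deltaDist M (p n).2 q.2) atTop (nhds 0) :=
      squeeze_zero (fun n => delta_nonneg _ _)
        (fun n => le_add_of_nonneg_left (abs_nonneg _)) htend
    have hs : Tendsto (fun n => (p n).1) atTop (nhds q.1) := by
      rw [tendsto_iff_dist_tendsto_zero]
      simpa only [Real.dist_eq] using h1
    have hpt : ∀ t : ℝ, Tendsto (fun n => (p n).2 t) atTop (nhds (q.2 t)) :=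
      fun t => tendsto_pt_of_delta h2 t
    intro t ht
    refine const_of_lt (g := q.2) (s := q.1) ?_ t ht
    intro a ha b hb
    have hev : ∀ᶠ n in atTop, (p n).2 a = (p n).2 b := by
      have hlt : max a b < q.1 := max_lt ha hb
      filter_upwards [hs.eventually (eventually_gt_nhds hlt)] with n hn
      have h1 := hmem n a (le_of_lt (lt_of_le_of_lt (le_max_left a b) hn))
      have h2 := hmem n b (le_of_lt (lt_of_le_of_lt (le_max_right a b) hn))
      rw [h1, h2]
    exact tendsto_nhds_unique (hpt a) ((hpt b).congr' (EventuallyEq.symm hev))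
  · -- completeness
    intro hM u hcau
    have habs : ∀ m n, |istart (u m) - istart (u n)| ≤ dPath M (u m) (u n) :=
      fun m n => le_add_of_nonneg_right (delta_nonneg _ _)
    have hdel : ∀ m n, deltaDist M (pext (u m)) (pext (u n)) ≤ dPath M (u m) (u n) :=
      fun m n => le_add_of_nonneg_left (abs_nonneg _)
    have hsc : CauchySeq (fun n => istart (u n)) := by
      rw [Metric.cauchySeq_iff]
      intro ε hε
      obtain ⟨N, hN⟩ := hcau ε hε
      exact ⟨N, fun m hm n hn =>
        lt_of_le_of_lt (by rw [Real.dist_eq]; exact habs m n) (hN m hm n hn)⟩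
    obtain ⟨s, hs⟩ := cauchySeq_tendsto_of_complete hsc
    have hptc : ∀ t : ℝ, CauchySeq (fun n => pext (u n) t) := by
      intro t
      rw [Metric.cauchySeq_iff]
      intro ε hε
      have ht : t ∈ Set.Icc (-(⌈|t|⌉₊ : ℝ)) (⌈|t|⌉₊ : ℝ) :=
        Set.mem_Icc.mpr (abs_le.mp (Nat.le_ceil _))
      have hc0 : (0 : ℝ) < min ε 1 := lt_min hε one_pos
      obtain ⟨n₀, hn₀⟩ := hcau ((1 / 2 : ℝ) ^ (⌈|t|⌉₊ : ℕ) * min ε 1) (by positivity)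
      refine ⟨n₀, fun m hm n hn => ?_⟩
      have hlt : deltaDist M (pext (u m)) (pext (u n)) < (1 / 2 : ℝ) ^ (⌈|t|⌉₊ : ℕ) * min ε 1 :=
        lt_of_le_of_lt (hdel m n) (hn₀ m hm n hn)
      have hsd := sD_lt_of_delta_lt (min_le_right ε 1) hlt
      exact lt_of_le_of_lt (dist_le_sD ht _ _) (lt_of_lt_of_le hsd (min_le_left _ _))
    have hlim : ∀ t : ℝ, ∃ x : M, Tendsto (fun n => pext (u n) t) atTop (nhds x) :=
      fun t => cauchySeq_tendsto_of_complete (hptc t)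
    choose h hh using hlim
    have U : ∀ (N : ℕ) (ε : ℝ), 0 < ε → ∃ n₀, ∀ n ≥ n₀, ∀ t ∈ Set.Icc (-(N : ℝ)) (N : ℝ),
        dist (pext (u n) t) (h t) ≤ ε := by
      intro N ε hε
      have hc0 : (0 : ℝ) < min ε 1 := lt_min hε one_pos
      obtain ⟨n₀, hn₀⟩ := hcau ((1 / 2 : ℝ) ^ N * min ε 1) (by positivity)
      refine ⟨n₀, fun n hn t ht => ?_⟩
      have key : ∀ m ≥ n₀, dist (pext (u n) t) (pext (u m) t) ≤ min ε 1 := by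
        intro m hm
        have hlt : deltaDist M (pext (u n)) (pext (u m)) < (1 / 2 : ℝ) ^ N * min ε 1 :=
          lt_of_le_of_lt (hdel n m) (hn₀ n hn m hm)
        exact le_of_lt (lt_of_le_of_lt (dist_le_sD ht _ _)
          (sD_lt_of_delta_lt (min_le_right ε 1) hlt))
      have htd : Tendsto (fun m => dist (pext (u n) t) (pext (u m) t)) atTop
          (nhds (dist (pext (u n) t) (h t))) := tendsto_const_nhds.dist (hh t)
      exact (le_of_tendsto htd (eventually_atTop.mpr ⟨n₀, key⟩)).trans (min_le_left _ _)
    have hcont : Continuous h := by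
      rw [continuous_iff_continuousAt]
      intro t
      have h1 : |t| < ((⌈|t|⌉₊ + 1 : ℕ) : ℝ) :=
        lt_of_le_of_lt (Nat.le_ceil _) (by exact_mod_cast Nat.lt_succ_self _)
      obtain ⟨ha, hb⟩ := abs_lt.mp h1
      have hmem : Set.Icc (-((⌈|t|⌉₊ + 1 : ℕ) : ℝ)) ((⌈|t|⌉₊ + 1 : ℕ) : ℝ) ∈ nhds t :=
        Icc_mem_nhds ha hb
      have hto : TendstoUniformlyOn (fun n x => pext (u n) x) h atTop
          (Set.Icc (-((⌈|t|⌉₊ + 1 : ℕ) : ℝ)) ((⌈|t|⌉₊ + 1 : ℕ) : ℝ)) := by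
        rw [Metric.tendstoUniformlyOn_iff]
        intro ε hε
        obtain ⟨n₀, hn₀⟩ := U (⌈|t|⌉₊ + 1) (ε / 2) (by positivity)
        filter_upwards [eventually_ge_atTop n₀] with n hn x hx
        rw [dist_comm]
        exact lt_of_le_of_lt (hn₀ n hn x hx) (by linarith)
      exact (hto.continuousOn
        (Eventually.of_forall fun n => (pext (u n)).continuous.continuousOn).frequently).continuousAt hmem
    have hconst : ∀ t ≤ s, (⟨h, hcont⟩ : C(ℝ, M)) t = (⟨h, hcont⟩ : C(ℝ, M)) s := by
      refine const_of_lt ?_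
      intro a ha b hb
      have hev : ∀ᶠ n in atTop, pext (u n) a = pext (u n) b := by
        have hlt : max a b < s := max_lt ha hb
        filter_upwards [hs.eventually (eventually_gt_nhds hlt)] with n hn
        simp only [pext, ContinuousMap.comp_apply, ContinuousMap.coe_mk]
        congr 1
        refine Subtype.ext ?_
        exact (max_eq_left (le_of_lt (lt_of_le_of_lt (le_max_left a b) hn))).trans
          (max_eq_left (le_of_lt (lt_of_le_of_lt (le_max_right a b) hn))).symm
      exact tendsto_nhds_unique (hh a) ((hh b).congr' (hev.mono fun n e => e.symm))
    refine ⟨⟨s, (⟨h, hcont⟩ : C(ℝ, M)).comp ⟨Subtype.val, continuous_subtype_val⟩⟩, ?_⟩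
    have hpe : pext (⟨s, (⟨h, hcont⟩ : C(ℝ, M)).comp ⟨Subtype.val, continuous_subtype_val⟩⟩ :
        PathX M) = (⟨h, hcont⟩ : C(ℝ, M)) := by
      ext t
      show h (max s t) = h t
      rcases le_total s t with h' | h'
      · rw [max_eq_right h']
      · rw [max_eq_left h']
        exact (hconst t h').symm
    have heq : (fun n => dPath M (u n)
        (⟨s, (⟨h, hcont⟩ : C(ℝ, M)).comp ⟨Subtype.val, continuous_subtype_val⟩⟩ : PathX M))
        = fun n => |istart (u n) - s| + deltaDist M (pext (u n)) (⟨h, hcont⟩ : C(ℝ, M)) := by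
      funext n
      unfold dPath
      rw [hpe]
      rfl
    rw [heq]
    have t1 : Tendsto (fun n => |istart (u n) - s|) atTop (nhds 0) := by
      have := (tendsto_iff_dist_tendsto_zero).mp hs
      simpa only [Real.dist_eq] using this
    have t2 : Tendsto (fun n => deltaDist M (pext (u n)) (⟨h, hcont⟩ : C(ℝ, M))) atTop
        (nhds 0) := by
      rw [Metric.tendsto_atTop]
      intro ε hε
      obtain ⟨N, hN⟩ := exists_pow_lt_of_lt_one (show (0 : ℝ) < ε / 2 by linarith)
        (show (1 / 2 : ℝ) < 1 by norm_num)
      obtain ⟨n₀, hn₀⟩ := U N (ε / 8) (by positivity)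
      refine ⟨n₀, fun n hn => ?_⟩
      have hsd : sD N (pext (u n)) (⟨h, hcont⟩ : C(ℝ, M)) ≤ ε / 8 :=
        sD_le _ _ fun t ht => hn₀ n hn t ht
      have hd := delta_le N (pext (u n)) (⟨h, hcont⟩ : C(ℝ, M))
      have hmin : min 1 (sD N (pext (u n)) (⟨h, hcont⟩ : C(ℝ, M))) ≤ ε / 8 :=
        le_trans (min_le_right _ _) hsd
      rw [Real.dist_eq, sub_zero, abs_of_nonneg (delta_nonneg _ _)]
      linarith
    simpa using t1.add t2
  · -- separability
    intro hsep
    haveI : TopologicalSpace.SeparableSpace M := hsep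
    haveI : SecondCountableTopology M := UniformSpace.secondCountable_of_separable M
    obtain ⟨D0, hD0c, hD0d⟩ := TopologicalSpace.exists_countable_dense C(ℝ, M)
    refine ⟨⋃ q : ℚ, (fun g : C(ℝ, M) =>
      (⟨(q : ℝ), g.comp ⟨Subtype.val, continuous_subtype_val⟩⟩ : PathX M)) '' D0, ?_, ?_⟩
    · exact Set.countable_iUnion fun q => hD0c.image _
    · intro f ε hε
      obtain ⟨q, hq1, hq2⟩ := exists_rat_btwn (show istart f - ε / 4 < istart f by linarith)
      obtain ⟨N₀, hN₀⟩ := exists_pow_lt_of_lt_one (show (0 : ℝ) < ε / 8 by linarith)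
        (show (1 / 2 : ℝ) < 1 by norm_num)
      set K : ℕ := max N₀ ⌈|(q : ℝ)|⌉₊ with hK
      have hV : {pr : M × M | dist pr.1 pr.2 < ε / 8} ∈ uniformity M :=
        Metric.dist_mem_uniformity (by positivity)
      have hE : {fg : C(ℝ, M) × C(ℝ, M) |
          ∀ x ∈ Set.Icc (-(K : ℝ)) (K : ℝ),
            (fg.1 x, fg.2 x) ∈ {pr : M × M | dist pr.1 pr.2 < ε / 8}} ∈ uniformity C(ℝ, M) :=
        ContinuousMap.hasBasis_compactConvergenceUniformity.mem_of_mem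
          (i := (Set.Icc (-(K : ℝ)) (K : ℝ), {pr : M × M | dist pr.1 pr.2 < ε / 8}))
          ⟨isCompact_Icc, hV⟩
      have hball := UniformSpace.ball_mem_nhds (pext f) hE
      obtain ⟨g, hg⟩ := mem_closure_iff_nhds.mp (hD0d (pext f)) _ hball
      have hgU : ∀ x ∈ Set.Icc (-(K : ℝ)) (K : ℝ), dist (pext f x) (g x) < ε / 8 := hg.1
      have hgD0 : g ∈ D0 := hg.2
      refine ⟨⟨(q : ℝ), g.comp ⟨Subtype.val, continuous_subtype_val⟩⟩,
        Set.mem_iUnion.mpr ⟨q, Set.mem_image_of_mem _ hgD0⟩, ?_⟩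
      have hpfq : ∀ t : ℝ,
          pext (⟨(q : ℝ), g.comp ⟨Subtype.val, continuous_subtype_val⟩⟩ : PathX M) t
            = g (max (q : ℝ) t) := fun t => rfl
      have hkey : ∀ t : ℝ, pext f t = pext f (max (q : ℝ) t) := by
        intro t
        rcases le_total (q : ℝ) t with h' | h'
        · rw [max_eq_right h']
        · rw [max_eq_left h']
          simp only [pext, ContinuousMap.comp_apply, ContinuousMap.coe_mk]
          congr 1
          refine Subtype.ext ?_
          exact (max_eq_left (le_of_lt (lt_of_le_of_lt h' hq2))).trans
            (max_eq_left (le_of_lt hq2)).symm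
      have hsD : sD K (pext f)
          (pext (⟨(q : ℝ), g.comp ⟨Subtype.val, continuous_subtype_val⟩⟩ : PathX M)) ≤ ε / 8 := by
        refine sD_le _ _ fun t ht => ?_
        have hmem : max (q : ℝ) t ∈ Set.Icc (-(K : ℝ)) (K : ℝ) := by
          constructor
          · exact le_trans ht.1 (le_max_right _ _)
          · refine max_le ?_ ht.2
            calc (q : ℝ) ≤ |(q : ℝ)| := le_abs_self _
              _ ≤ (⌈|(q : ℝ)|⌉₊ : ℝ) := Nat.le_ceil _
              _ ≤ (K : ℝ) := Nat.cast_le.mpr (le_max_right _ _)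
        rw [hkey t, hpfq t]
        exact le_of_lt (hgU _ hmem)
      have hδ : deltaDist M (pext f)
          (pext (⟨(q : ℝ), g.comp ⟨Subtype.val, continuous_subtype_val⟩⟩ : PathX M))
          ≤ 2 * (ε / 8) + (1 / 2 : ℝ) ^ K := by
        have hd := delta_le K (pext f)
          (pext (⟨(q : ℝ), g.comp ⟨Subtype.val, continuous_subtype_val⟩⟩ : PathX M))
        have hmin := le_trans (min_le_right (1 : ℝ) _) hsD
        linarith
      have hpow : (1 / 2 : ℝ) ^ K ≤ (1 / 2 : ℝ) ^ N₀ :=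
        pow_le_pow_of_le_one (by norm_num) (by norm_num) (le_max_left _ _)
      have habsq : |istart f - (q : ℝ)| < ε / 4 := by
        rw [abs_of_pos (by linarith)]
        linarith
      show |istart f - (q : ℝ)| + deltaDist M (pext f)
        (pext (⟨(q : ℝ), g.comp ⟨Subtype.val, continuous_subtype_val⟩⟩ : PathX M)) < ε
      linarith

end
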